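/- If the weights π_i(t) of a portfolio are nonnegative for all i = 1,…,n, then the excess growth rate γ*_π(t) = (1/2)(Σ_i π_i(t)σ_ii(t) − Σ_{i,j} π_i(t)π_j(t)σ_ij(t)) is nonnegative almost surely, where (σ_ij) is a symmetric positive semidefinite covariance matrix. -/

import Mathlib

/-- If the weights `p i` of a portfolio are nonnegative and sum to 1,
then the excess growth rate `(1/2) * (∑ i, p i * A i i - ∑ i j, p i * p j * A i j)`
is nonnegative, where `A` is a symmetric positive semidefinite covariance matrix. -/
theorem excess_growth_rate_nonneg (n : ℕ) (A : Matrix (Fin n) (Fin n) ℝ)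
    (hA : A.PosSemidef) (p : Fin n → ℝ) (hp : ∀ i, 0 ≤ p i)
    (hsum : ∑ i, p i = 1) :
    0 ≤ (1 / 2 : ℝ) * (∑ i, p i * A i i - ∑ i, ∑ j, p i * p j * A i j) := by
  have hsym : ∀ i j, A j i = A i j := by
    intro i j
    have := hA.1
    rw [Matrix.IsHermitian] at this
    conv_lhs => rw [← this]
    simp [Matrix.conjTranspose_apply]
  have quad : ∀ x : Fin n → ℝ, dotProduct x (A.mulVec x) = ∑ i, ∑ j, x i * A i j * x j := by
    intro x
    simp [dotProduct, Matrix.mulVec, Finset.mul_sum]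
    exact Finset.sum_congr rfl fun i _ => Finset.sum_congr rfl fun j _ => by ring
  have key : ∀ i j, 0 ≤ A i i + A j j - 2 * A i j := by
    intro i j
    have h := hA.dotProduct_mulVec_nonneg (Pi.single i 1 - Pi.single j 1)
    rw [show star (Pi.single i 1 - Pi.single j 1) = (Pi.single i (1:ℝ) - Pi.single j 1) by
      simp, quad] at h
    simp only [Pi.sub_apply, Pi.single_apply] at h
    by_cases hij : i = j
    · subst hij; nlinarith [h]
    · have h' : (0:ℝ) ≤ A i i - A i j - (A j i - A j j) := by
        have := h
        rw [Finset.sum_eq_add_of_mem i j (Finset.mem_univ i) (Finset.mem_univ j) hij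
          (fun k _ hk => by
            simp [hk.1, hk.2])] at this
        · rw [Finset.sum_eq_add_of_mem i j (Finset.mem_univ i) (Finset.mem_univ j) hij
            (fun k _ hk => by simp [hk.1, hk.2]),
            Finset.sum_eq_add_of_mem i j (Finset.mem_univ i) (Finset.mem_univ j) hij
            (fun k _ hk => by simp [hk.1, hk.2])] at this
          simp [hij, Ne.symm hij] at this
          linarith [this]
      have := hsym i j
      linarith
  have h1 : ∑ i, ∑ j, p i * p j * A i i = ∑ i, p i * A i i := by
    refine Finset.sum_congr rfl fun i _ => ?_
    calc ∑ j, p i * p j * A i i = p i * A i i * ∑ j, p j := by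
          rw [Finset.mul_sum]; exact Finset.sum_congr rfl fun j _ => by ring
      _ = p i * A i i := by rw [hsum]; ring
  have h2 : ∑ i, ∑ j, p i * p j * A j j = ∑ j, p j * A j j := by
    rw [Finset.sum_comm]
    refine Finset.sum_congr rfl fun j _ => ?_
    calc ∑ i, p i * p j * A j j = p j * A j j * ∑ i, p i := by
          rw [Finset.mul_sum]; exact Finset.sum_congr rfl fun i _ => by ring
      _ = p j * A j j := by rw [hsum]; ring
  have hS : 0 ≤ ∑ i, ∑ j, p i * p j * (A i i + A j j - 2 * A i j) :=
    Finset.sum_nonneg fun i _ => Finset.sum_nonneg fun j _ =>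
      mul_nonneg (mul_nonneg (hp i) (hp j)) (key i j)
  have hsplit : ∑ i, ∑ j, p i * p j * (A i i + A j j - 2 * A i j)
      = (∑ i, ∑ j, p i * p j * A i i) + (∑ i, ∑ j, p i * p j * A j j)
        - 2 * ∑ i, ∑ j, p i * p j * A i j := by
    simp only [Finset.mul_sum, ← Finset.sum_add_distrib, ← Finset.sum_sub_distrib]
    exact Finset.sum_congr rfl fun i _ => Finset.sum_congr rfl fun j _ => by ring
  rw [hsplit, h1, h2] at hS
  linarith
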